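/- Let d ≥ 4 be even and n ≥ 1. Consider the map h_1: P^n → P^n sending [x_0,…,x_n] to [x_0^{d-2},…,x_n^{d-2}], restricted to the Fermat hypersurface V(x_0^d + ⋯ + x_n^d). Then for a generic point p on the hypersurface, the fiber h_1^{-1}(h_1(p)) intersected with the hypersurface consists exactly of the 2^n points [±p_0, ±p_1, …, ±p_n] (up to overall scalar). -/

import Mathlib

lemma roots_unity_sum_complex {ι : Type*} [Fintype ι] {m : ℕ} (hm : 1 ≤ m) (z : ι → ℂ)
    (hz : ∀ i, z i ^ m = 1) (hsum : ∑ i, z i = (Fintype.card ι : ℂ)) : ∀ i, z i = 1 := by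
  have hm0 : m ≠ 0 := by omega
  have habs : ∀ i, ‖z i‖ = 1 := by
    intro i
    have h1 : ‖z i‖ ^ m = 1 := by
      rw [← norm_pow, hz i, norm_one]
    rcases lt_trichotomy ‖z i‖ 1 with h | h | h
    · exact absurd h1 (by nlinarith [pow_lt_one₀ (norm_nonneg (z i)) h hm0])
    · exact h
    · exact absurd h1 (by nlinarith [one_lt_pow₀ h hm0])
  have hre : ∀ i, (z i).re = 1 := by
    have hsumre : ∑ i, (1 - (z i).re) = 0 := by
      have := congrArg Complex.re hsum
      simp [Complex.re_sum] at this
      simp [Finset.sum_sub_distrib, this]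
    intro i
    have hle : ∀ i, (z i).re ≤ 1 := fun i => by
      calc (z i).re ≤ ‖z i‖ := Complex.re_le_norm _
        _ = 1 := habs i
    have := (Finset.sum_eq_zero_iff_of_nonneg (fun i _ => by linarith [hle i])).mp hsumre i
      (Finset.mem_univ i)
    linarith
  intro i
  have h2 : (z i).re ^ 2 + (z i).im ^ 2 = 1 := by
    have := Complex.sq_norm (z i)
    rw [habs i] at this
    simpa [Complex.normSq_apply, sq] using this.symm
  have him : (z i).im = 0 := by nlinarith [hre i]
  apply Complex.ext <;> simp [hre i, him]

lemma roots_unity_sum_field {K : Type*} [Field K] [CharZero K] {ι : Type*} [Fintype ι]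
    {m : ℕ} (hm : 1 ≤ m) (ν : ι → K)
    (hν : ∀ i, ν i ^ m = 1) (hsum : ∑ i, ν i = (Fintype.card ι : K)) : ∀ i, ν i = 1 := by
  set L := IntermediateField.adjoin ℚ (Set.range ν) with hL
  have hint : ∀ x ∈ Set.range ν, IsIntegral ℚ x := by
    rintro x ⟨i, rfl⟩
    refine ⟨Polynomial.X ^ m - Polynomial.C 1, ?_, ?_⟩
    · apply Polynomial.monic_X_pow_sub_C _ (by omega)
    · simp [Polynomial.eval₂, hν i]
  have halg : Algebra.IsAlgebraic ℚ L := IntermediateField.isAlgebraic_adjoin hint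
  let φ : L →ₐ[ℚ] ℂ := IsAlgClosed.lift
  have hmem : ∀ i, ν i ∈ L := fun i => IntermediateField.subset_adjoin _ _ ⟨i, rfl⟩
  set ν' : ι → L := fun i => ⟨ν i, hmem i⟩ with hν'
  have hz : ∀ i, (φ (ν' i)) ^ m = 1 := by
    intro i
    rw [← map_pow]
    have : ν' i ^ m = 1 := by ext; simpa using hν i
    rw [this, map_one]
  have hs : ∑ i, φ (ν' i) = (Fintype.card ι : ℂ) := by
    rw [← map_sum]
    have : ∑ i, ν' i = (Fintype.card ι : L) := by
      ext
      push_cast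
      simpa using hsum
    rw [this, map_natCast]
  intro i
  have := roots_unity_sum_complex hm (fun i => φ (ν' i)) hz hs i
  have h1 : φ (ν' i) = φ 1 := by simpa using this
  have := φ.toRingHom.injective h1
  have : ν' i = 1 := by exact_mod_cast this
  simpa [hν'] using congrArg Subtype.val this

/-- For even `d ≥ 4`, on the Fermat hypersurface
`V(x_0^d + ⋯ + x_n^d) ⊂ P^n`, the fiber of the coordinatewise `(d-2)`-power map through a
generic point `p` consists exactly of the `2^n` points `[±p_0 : … : ±p_n]`. -/
theorem power_map_fiber_on_fermat_even {K : Type*} [Field K]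
    [IsAlgClosed K] [CharZero K] {n d : ℕ} (hn : 1 ≤ n) (hd : 4 ≤ d) (heven : Even d) :
    ∃ P : MvPolynomial (Fin (n + 1)) K,
      (∃ p₀ : Fin (n + 1) → K, p₀ ≠ 0 ∧ (∑ i, p₀ i ^ d) = 0 ∧
        MvPolynomial.eval p₀ P ≠ 0) ∧
      ∀ p : Fin (n + 1) → K, p ≠ 0 → (∑ i, p i ^ d) = 0 →
        MvPolynomial.eval p P ≠ 0 →
        (∀ q : Fin (n + 1) → K, q ≠ 0 → (∑ i, q i ^ d) = 0 →
          ((∃ c : K, c ≠ 0 ∧ ∀ i, q i ^ (d - 2) = c * p i ^ (d - 2)) ↔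
            (∃ t : K, t ≠ 0 ∧ ∃ ε : Fin (n + 1) → K,
              (∀ i, ε i = 1 ∨ ε i = -1) ∧ ∀ i, q i = t * ε i * p i))) ∧
        Set.ncard { x : Projectivization K (Fin (n + 1) → K) |
          ∃ (q : Fin (n + 1) → K) (hq : q ≠ 0), (∑ i, q i ^ d) = 0 ∧
            (∃ c : K, c ≠ 0 ∧ ∀ i, q i ^ (d - 2) = c * p i ^ (d - 2)) ∧
            x = Projectivization.mk K q hq } = 2 ^ n := by
  classical
  obtain ⟨r, hr⟩ := heven
  have hr2 : 2 ≤ r := by omega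
  set m : ℕ := r - 1 with hmdef
  have hm : 1 ≤ m := by omega
  have hd2 : d - 2 = 2 * m := by omega
  have hdm : d = 2 * m + 2 := by omega
  -- the finset of m-th roots of unity
  set R : Finset K := ((Polynomial.X ^ m - Polynomial.C 1 : Polynomial K).roots).toFinset
    with hRdef
  have hRmem : ∀ x : K, x ∈ R ↔ x ^ m = 1 := by
    intro x
    have hpol : (Polynomial.X ^ m - Polynomial.C 1 : Polynomial K) ≠ 0 :=
      Polynomial.X_pow_sub_C_ne_zero (by omega) 1
    rw [hRdef, Multiset.mem_toFinset, Polynomial.mem_roots hpol]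
    simp [Polynomial.IsRoot, sub_eq_zero]
  -- the bad tuples
  set B : Finset (Fin (n + 1) → K) :=
    (Fintype.piFinset fun _ : Fin (n + 1) => R).filter
      (fun μ => ¬ ∀ i j : Fin (n + 1), μ i = μ j) with hBdef
  have hBmem : ∀ μ : Fin (n + 1) → K,
      μ ∈ B ↔ (∀ i, μ i ^ m = 1) ∧ ¬ ∀ i j : Fin (n + 1), μ i = μ j := by
    intro μ
    simp only [hBdef, Finset.mem_filter, Fintype.mem_piFinset, hRmem]
  set P : MvPolynomial (Fin (n + 1)) K :=
    (∏ i, MvPolynomial.X i) *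
      ∏ μ ∈ B, (∑ i, MvPolynomial.C (μ i) * MvPolynomial.X i ^ d) with hPdef
  have hevalP : ∀ p : Fin (n + 1) → K,
      MvPolynomial.eval p P = (∏ i, p i) * ∏ μ ∈ B, (∑ i, μ i * p i ^ d) := by
    intro p
    simp [hPdef]
  refine ⟨P, ?_, ?_⟩
  · -- existence of a good point p₀
    obtain ⟨a, ha⟩ := IsAlgClosed.exists_pow_nat_eq (-(n : K)) (show 0 < d by omega)
    have hnK : (n : K) ≠ 0 := Nat.cast_ne_zero.mpr (by omega)
    have ha0 : a ≠ 0 := by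
      intro h
      rw [h, zero_pow (by omega : d ≠ 0)] at ha
      exact hnK (neg_eq_zero.mp ha.symm)
    set p₀ : Fin (n + 1) → K := fun i => if (i : ℕ) < n then 1 else a with hp₀def
    have hp₀i : ∀ i, p₀ i ≠ 0 := by
      intro i
      by_cases h : (i : ℕ) < n <;> simp [hp₀def, h, ha0]
    have hp₀cast : ∀ j : Fin n, p₀ j.castSucc = 1 := by
      intro j
      simp [hp₀def, j.isLt]
    have hp₀last : p₀ (Fin.last n) = a := by simp [hp₀def]
    have hferm : (∑ i, p₀ i ^ d) = 0 := by
      rw [Fin.sum_univ_castSucc]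
      simp only [hp₀last, ha]
      rw [Finset.sum_congr rfl (fun j _ => by rw [hp₀cast j, one_pow])]
      simp
    refine ⟨p₀, ?_, hferm, ?_⟩
    · intro h
      exact hp₀i 0 (congrFun h 0)
    · rw [hevalP]
      refine mul_ne_zero (Finset.prod_ne_zero_iff.mpr fun i _ => hp₀i i) ?_
      refine Finset.prod_ne_zero_iff.mpr fun μ hμ => ?_
      obtain ⟨hμR, hμnc⟩ := (hBmem μ).mp hμ
      intro hzero
      apply hμnc
      have hμlast : μ (Fin.last n) ≠ 0 := by
        intro h
        have := hμR (Fin.last n)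
        rw [h, zero_pow (by omega : m ≠ 0)] at this
        exact zero_ne_one this
      -- rewrite the vanishing sum
      have hsum' : (∑ j : Fin n, μ j.castSucc) = (n : K) * μ (Fin.last n) := by
        rw [Fin.sum_univ_castSucc] at hzero
        have h1 : ∀ j : Fin n, μ j.castSucc * p₀ j.castSucc ^ d = μ j.castSucc := by
          intro j; rw [hp₀cast j, one_pow, mul_one]
        rw [Finset.sum_congr rfl (fun j _ => h1 j), hp₀last, ha] at hzero
        linear_combination hzero
      set ν : Fin n → K := fun j => μ j.castSucc * (μ (Fin.last n))⁻¹ with hνdef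
      have hν1 : ∀ j, ν j ^ m = 1 := by
        intro j
        rw [hνdef]
        simp only [mul_pow, inv_pow, hμR]
        rw [inv_one, mul_one]
      have hνsum : ∑ j, ν j = (Fintype.card (Fin n) : K) := by
        rw [hνdef, Fintype.card_fin]
        rw [← Finset.sum_mul, hsum', mul_assoc, mul_inv_cancel₀ hμlast, mul_one]
      have hall := roots_unity_sum_field hm ν hν1 hνsum
      have hconst : ∀ i, μ i = μ (Fin.last n) := by
        intro i
        rcases Fin.eq_castSucc_or_eq_last i with ⟨j, rfl⟩ | rfl
        · have := hall j
          rw [hνdef] at this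
          field_simp at this
          exact this
        · rfl
      intro i j
      rw [hconst i, hconst j]
  · intro p hp hpferm hpP
    rw [hevalP] at hpP
    have hppos : ∀ i, p i ≠ 0 := by
      intro i
      have h1 : (∏ i, p i) ≠ 0 := left_ne_zero_of_mul hpP
      exact Finset.prod_ne_zero_iff.mp h1 i (Finset.mem_univ i)
    have hBgood : ∀ μ : Fin (n + 1) → K, (∀ i, μ i ^ m = 1) →
        (∑ i, μ i * p i ^ d) = 0 → ∀ i j : Fin (n + 1), μ i = μ j := by
      intro μ hμm hμsum
      by_contra hnc
      have hμB : μ ∈ B := (hBmem μ).mpr ⟨hμm, hnc⟩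
      have h2 : (∏ μ ∈ B, ∑ i, μ i * p i ^ d) ≠ 0 := right_ne_zero_of_mul hpP
      exact (Finset.prod_ne_zero_iff.mp h2 μ hμB) hμsum
    have hiff : ∀ q : Fin (n + 1) → K, q ≠ 0 → (∑ i, q i ^ d) = 0 →
        ((∃ c : K, c ≠ 0 ∧ ∀ i, q i ^ (d - 2) = c * p i ^ (d - 2)) ↔
          (∃ t : K, t ≠ 0 ∧ ∃ ε : Fin (n + 1) → K,
            (∀ i, ε i = 1 ∨ ε i = -1) ∧ ∀ i, q i = t * ε i * p i)) := by
      intro q hq hqferm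
      constructor
      · rintro ⟨c, hc0, hc⟩
        have hq0 : ∀ i, q i ≠ 0 := by
          intro i hqi
          have h3 := hc i
          rw [hqi, zero_pow (by omega : d - 2 ≠ 0)] at h3
          exact (mul_ne_zero hc0 (pow_ne_zero _ (hppos i))) h3.symm
        set s : Fin (n + 1) → K := fun i => (q i / p i) ^ 2 with hsdef
        have hs0 : ∀ i, s i ≠ 0 :=
          fun i => pow_ne_zero 2 (div_ne_zero (hq0 i) (hppos i))
        have hsm : ∀ i, s i ^ m = c := by
          intro i
          rw [hsdef]
          dsimp only
          rw [← pow_mul, ← hd2, div_pow, hc i,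
            mul_div_assoc, div_self (pow_ne_zero _ (hppos i)), mul_one]
        have he1 : ∀ i, s i * p i ^ 2 = q i ^ 2 := by
          intro i
          simp only [hsdef]
          rw [div_pow, div_mul_cancel₀ _ (pow_ne_zero 2 (hppos i))]
        have hsum0 : ∑ i, s i * p i ^ d = 0 := by
          have hkey : ∀ i, q i ^ d = c * (s i * p i ^ d) := by
            intro i
            have hpd : p i ^ d = p i ^ 2 * p i ^ (d - 2) := by
              rw [← pow_add]
              congr 1
              omega
            have hqd : q i ^ d = q i ^ 2 * q i ^ (d - 2) := by
              rw [← pow_add]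
              congr 1
              omega
            rw [hqd, hc i, ← he1 i, hpd]
            ring
          have h4 := hqferm
          rw [Finset.sum_congr rfl (fun i _ => hkey i), ← Finset.mul_sum] at h4
          exact (mul_eq_zero.mp h4).resolve_left hc0
        set l : Fin (n + 1) := Fin.last n with hldef
        set μ : Fin (n + 1) → K := fun i => s i / s l with hμdef
        have hμm : ∀ i, μ i ^ m = 1 := by
          intro i
          rw [hμdef]
          dsimp only
          rw [div_pow, hsm i, hsm l, div_self hc0]
        have hμsum : ∑ i, μ i * p i ^ d = 0 := by
          have h5 : ∀ i, μ i * p i ^ d = s i * p i ^ d / s l := by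
            intro i
            rw [hμdef]
            ring
          rw [Finset.sum_congr rfl (fun i _ => h5 i), ← Finset.sum_div, hsum0, zero_div]
        have hconst := hBgood μ hμm hμsum
        have hseq : ∀ i, s i = s l := by
          intro i
          have h6 := hconst i l
          rw [hμdef] at h6
          dsimp only at h6
          rw [div_self (hs0 l)] at h6
          exact (div_eq_one_iff_eq (hs0 l)).mp h6
        have hsq : ∀ i, (q i * p l - q l * p i) * (q i * p l + q l * p i) = 0 := by
          intro i
          have e1' : q i ^ 2 * p l ^ 2 = q l ^ 2 * p i ^ 2 := by
            rw [← he1 i, ← he1 l, hseq i]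
            ring
          linear_combination e1'
        refine ⟨q l / p l, div_ne_zero (hq0 l) (hppos l),
          fun i => if q i * p l = q l * p i then 1 else -1, ?_, ?_⟩
        · intro i
          dsimp only
          split <;> simp
        · intro i
          dsimp only
          rcases mul_eq_zero.mp (hsq i) with h7 | h7
          · have h8 : q i * p l = q l * p i := by linear_combination h7
            rw [if_pos h8, div_mul_eq_mul_div, div_mul_eq_mul_div, eq_div_iff (hppos l)]
            linear_combination h7
          · have h8 : q i * p l ≠ q l * p i := by
              intro h9
              have h10 : q i * p l = 0 := by linear_combination (h9 + h7) / 2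
              rcases mul_eq_zero.mp h10 with h11 | h11
              · exact hq0 i h11
              · exact hppos l h11
            rw [if_neg h8, div_mul_eq_mul_div, div_mul_eq_mul_div, eq_div_iff (hppos l)]
            linear_combination h7
      · rintro ⟨t, ht, ε, hε, hqe⟩
        refine ⟨t ^ (d - 2), pow_ne_zero _ ht, fun i => ?_⟩
        have hε2 : ε i ^ 2 = 1 := by
          rcases hε i with h | h <;> rw [h] <;> ring
        have hεd : ε i ^ (d - 2) = 1 := by
          rw [hd2, pow_mul, hε2, one_pow]
        rw [hqe i, mul_pow, mul_pow, hεd, mul_one]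
    refine ⟨hiff, ?_⟩
    have hevend : Even d := ⟨r, hr⟩
    have hevend2 : Even (d - 2) := ⟨m, by omega⟩
    set e : (Fin n → Bool) → Fin (n + 1) → K := fun σ i =>
      if h : (i : ℕ) < n then (if σ ⟨i, h⟩ then 1 else -1) else 1 with hedef
    have he1 : ∀ σ i, e σ i = 1 ∨ e σ i = -1 := by
      intro σ i
      simp only [hedef]
      split
      · split
        · left; rfl
        · right; rfl
      · left; rfl
    have hen : ∀ σ, e σ (Fin.last n) = 1 := by
      intro σ
      simp [hedef]
    have hecast : ∀ σ (j : Fin n), e σ j.castSucc = if σ j then 1 else -1 := by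
      intro σ j
      simp [hedef, j.isLt]
    have hee0 : ∀ σ i, e σ i ≠ 0 := by
      intro σ i
      rcases he1 σ i with h | h <;> rw [h] <;> norm_num
    have hqne : ∀ σ : Fin n → Bool, (fun i => e σ i * p i) ≠ 0 := by
      intro σ h
      exact mul_ne_zero (hee0 σ 0) (hppos 0) (congrFun h 0)
    set g : (Fin n → Bool) → Projectivization K (Fin (n + 1) → K) :=
      fun σ => Projectivization.mk K (fun i => e σ i * p i) (hqne σ) with hgdef
    have hginj : Function.Injective g := by
      intro σ σ' hg
      rw [hgdef] at hg
      dsimp only at hg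
      rw [Projectivization.mk_eq_mk_iff] at hg
      obtain ⟨a, ha⟩ := hg
      have hal : (a : K) * (e σ' (Fin.last n) * p (Fin.last n)) =
          e σ (Fin.last n) * p (Fin.last n) := congrFun ha (Fin.last n)
      rw [hen, hen, one_mul] at hal
      have ha1 : (a : K) = 1 := by
        have := mul_right_cancel₀ (hppos (Fin.last n)) (hal.trans (one_mul _).symm)
        simpa using this
      funext j
      have hj := congrFun ha j.castSucc
      have hj' : (a : K) * (e σ' j.castSucc * p j.castSucc) = e σ j.castSucc * p j.castSucc := hj
      rw [ha1, one_mul] at hj'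
      have hj'' : e σ' j.castSucc = e σ j.castSucc :=
        mul_right_cancel₀ (hppos j.castSucc) hj'
      rw [hecast, hecast] at hj''
      by_cases h1 : σ j <;> by_cases h2 : σ' j <;>
        simp [h1, h2] at hj'' ⊢
      · exact absurd hj'' (by norm_num)
      · exact absurd hj'' (by norm_num)
    have hrange : { x : Projectivization K (Fin (n + 1) → K) |
        ∃ (q : Fin (n + 1) → K) (hq : q ≠ 0), (∑ i, q i ^ d) = 0 ∧
          (∃ c : K, c ≠ 0 ∧ ∀ i, q i ^ (d - 2) = c * p i ^ (d - 2)) ∧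
          x = Projectivization.mk K q hq } = Set.range g := by
      ext x
      simp only [Set.mem_setOf_eq, Set.mem_range]
      constructor
      · rintro ⟨q, hq, hqferm, hfib, rfl⟩
        obtain ⟨t, ht, ε, hε, hqe⟩ := (hiff q hq hqferm).mp hfib
        have hεsq : ∀ i, ε i * ε i = 1 := by
          intro i
          rcases hε i with h | h <;> rw [h] <;> norm_num
        have hε0 : ∀ i, ε i ≠ 0 := by
          intro i
          rcases hε i with h | h <;> rw [h] <;> norm_num
        set σ : Fin n → Bool :=
          fun j => if ε j.castSucc * ε (Fin.last n) = 1 then true else false with hσdef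
        have hclaim : ∀ i, e σ i = ε i * ε (Fin.last n) := by
          intro i
          rcases Fin.eq_castSucc_or_eq_last i with ⟨j, rfl⟩ | rfl
          · rw [hecast]
            by_cases hh : ε j.castSucc * ε (Fin.last n) = 1
            · rw [hσdef]
              simp [hh]
            · have hm1 : ε j.castSucc * ε (Fin.last n) = -1 := by
                rcases hε j.castSucc with h1 | h1 <;> rcases hε (Fin.last n) with h2 | h2 <;>
                  rw [h1, h2] at hh ⊢ <;> norm_num at hh <;> norm_num
              have hσj : σ j = false := by
                rw [hσdef]
                simp [hh]
              rw [hm1, hσj]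
              simp
          · rw [hen, hεsq]
        refine ⟨σ, ?_⟩
        rw [hgdef]
        dsimp only
        rw [Projectivization.mk_eq_mk_iff]
        refine ⟨Units.mk0 (t⁻¹ * ε (Fin.last n))
          (mul_ne_zero (inv_ne_zero ht) (hε0 (Fin.last n))), ?_⟩
        funext i
        have : (t⁻¹ * ε (Fin.last n)) * q i = e σ i * p i := by
          rw [hqe i, hclaim i]
          field_simp
        simpa [Units.smul_def] using this
      · rintro ⟨σ, rfl⟩
        refine ⟨fun i => e σ i * p i, hqne σ, ?_, ⟨1, one_ne_zero, fun i => ?_⟩, rfl⟩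
        · have hterm : ∀ i, (e σ i * p i) ^ d = p i ^ d := by
            intro i
            rw [mul_pow]
            rcases he1 σ i with h | h <;> rw [h]
            · rw [one_pow, one_mul]
            · rw [hevend.neg_one_pow, one_mul]
          rw [Finset.sum_congr rfl (fun i _ => hterm i)]
          exact hpferm
        · rw [mul_pow, one_mul]
          rcases he1 σ i with h | h <;> rw [h]
          · rw [one_pow, one_mul]
          · rw [hevend2.neg_one_pow, one_mul]
    rw [hrange]
    rw [show (Set.range g).ncard = Nat.card (Set.range g) from rfl,
      Nat.card_range_of_injective hginj]
    simp [Nat.card_eq_fintype_card]
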